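/- For ℓ = 1 and β₁ = β₁^(1) = (√(s/ω)+1)(√(s/ω)+2)/2, the function V(x) = sech^{√(s/ω)}(√ω x)·tanh(√ω x) is a bounded nonzero solution of -V'' + sV - β₁ U₀(x)² V = 0, where U₀(x) = √(2ω) sech(√ω x). -/

import Mathlib

lemma hasDerivAt_tanh' (y : ℝ) :
    HasDerivAt Real.tanh (1 - Real.tanh y ^ 2) y := by
  have hc : Real.cosh y ≠ 0 := (Real.cosh_pos y).ne'
  have h := (Real.hasDerivAt_sinh y).div (Real.hasDerivAt_cosh y) hc
  have heq : Real.tanh = fun y => Real.sinh y / Real.cosh y := by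
    funext z; exact Real.tanh_eq_sinh_div_cosh z
  rw [heq]
  refine h.congr_deriv (Eq.symm ?_)
  beta_reduce
  field_simp

lemma hasDerivAt_V_aux (a κ : ℝ) (x : ℝ) :
    HasDerivAt (fun x => ((Real.cosh (a * x))⁻¹) ^ κ * Real.tanh (a * x))
      (a * ((Real.cosh (a * x))⁻¹) ^ κ * (1 - (κ + 1) * Real.tanh (a * x) ^ 2)) x := by
  have hcpos : 0 < Real.cosh (a * x) := Real.cosh_pos _
  have hcne : Real.cosh (a * x) ≠ 0 := hcpos.ne'
  have hune : (Real.cosh (a * x))⁻¹ ≠ 0 := inv_ne_zero hcne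
  have hinner : HasDerivAt (fun x : ℝ => a * x) a x := by
    simpa using (hasDerivAt_id x).const_mul a
  have hc : HasDerivAt (fun x => Real.cosh (a * x)) (Real.sinh (a * x) * a) x :=
    (Real.hasDerivAt_cosh _).comp x hinner
  have hu : HasDerivAt (fun x => (Real.cosh (a * x))⁻¹)
      (-(Real.sinh (a * x) * a) / (Real.cosh (a * x)) ^ 2) x := hc.inv hcne
  have hg : HasDerivAt (fun x => ((Real.cosh (a * x))⁻¹) ^ κ)
      (κ * ((Real.cosh (a * x))⁻¹) ^ (κ - 1) *
        (-(Real.sinh (a * x) * a) / (Real.cosh (a * x)) ^ 2)) x :=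
    by have := (Real.hasDerivAt_rpow_const (p := κ) (Or.inl hune)).comp x hu; exact this
  have ht : HasDerivAt (fun x => Real.tanh (a * x))
      ((1 - Real.tanh (a * x) ^ 2) * a) x := (hasDerivAt_tanh' _).comp x hinner
  refine (hg.mul ht).congr_deriv (Eq.symm ?_)
  rw [Real.rpow_sub_one hune, Real.tanh_eq_sinh_div_cosh]
  field_simp
  ring

lemma hasDerivAt_W_aux (a κ : ℝ) (x : ℝ) :
    HasDerivAt (fun x => a * (((Real.cosh (a * x))⁻¹) ^ κ *
        (1 - (κ + 1) * Real.tanh (a * x) ^ 2)))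
      (a ^ 2 * ((Real.cosh (a * x))⁻¹) ^ κ * Real.tanh (a * x) *
        ((κ + 1) * (κ + 2) * Real.tanh (a * x) ^ 2 - (3 * κ + 2))) x := by
  have hcpos : 0 < Real.cosh (a * x) := Real.cosh_pos _
  have hcne : Real.cosh (a * x) ≠ 0 := hcpos.ne'
  have hune : (Real.cosh (a * x))⁻¹ ≠ 0 := inv_ne_zero hcne
  have hinner : HasDerivAt (fun x : ℝ => a * x) a x := by
    simpa using (hasDerivAt_id x).const_mul a
  have hc : HasDerivAt (fun x => Real.cosh (a * x)) (Real.sinh (a * x) * a) x :=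
    (Real.hasDerivAt_cosh _).comp x hinner
  have hu : HasDerivAt (fun x => (Real.cosh (a * x))⁻¹)
      (-(Real.sinh (a * x) * a) / (Real.cosh (a * x)) ^ 2) x := hc.inv hcne
  have hg : HasDerivAt (fun x => ((Real.cosh (a * x))⁻¹) ^ κ)
      (κ * ((Real.cosh (a * x))⁻¹) ^ (κ - 1) *
        (-(Real.sinh (a * x) * a) / (Real.cosh (a * x)) ^ 2)) x :=
    by have := (Real.hasDerivAt_rpow_const (p := κ) (Or.inl hune)).comp x hu; exact this
  have ht : HasDerivAt (fun x => Real.tanh (a * x))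
      ((1 - Real.tanh (a * x) ^ 2) * a) x := (hasDerivAt_tanh' _).comp x hinner
  have ht2 : HasDerivAt (fun x => Real.tanh (a * x) ^ 2)
      ((2 : ℕ) * Real.tanh (a * x) ^ 1 * ((1 - Real.tanh (a * x) ^ 2) * a)) x := ht.pow 2
  have hh : HasDerivAt (fun x => 1 - (κ + 1) * Real.tanh (a * x) ^ 2)
      (-((κ + 1) * ((2 : ℕ) * Real.tanh (a * x) ^ 1 * ((1 - Real.tanh (a * x) ^ 2) * a)))) x :=
    (ht2.const_mul (κ + 1)).const_sub 1
  refine ((hg.mul hh).const_mul a).congr_deriv (Eq.symm ?_)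
  rw [Real.rpow_sub_one hune, Real.tanh_eq_sinh_div_cosh]
  field_simp
  push_cast
  ring

lemma tanh_sq_eq (y : ℝ) : Real.tanh y ^ 2 = 1 - ((Real.cosh y)⁻¹) ^ 2 := by
  have hcne : Real.cosh y ≠ 0 := (Real.cosh_pos y).ne'
  rw [Real.tanh_eq_sinh_div_cosh]
  field_simp
  nlinarith [Real.cosh_sq_sub_sinh_sq y]

/-- For `ℓ = 1` and `β₁ = β₁⁽¹⁾ = (κ+1)(κ+2)/2` with `κ = √(s/ω)`, the function
`V(x) = sech^κ(√ω x)·tanh(√ω x)` is a bounded nonzero solution of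
`-V'' + sV - β₁U₀²V = 0`. -/
theorem stmt_10 (ω s : ℝ) (hω : 0 < ω) (hs : 0 < s)
    (κ : ℝ) (hκ : κ = Real.sqrt (s / ω))
    (β₁ : ℝ) (hβ₁ : β₁ = (κ + 1) * (κ + 2) / 2)
    (U₀ : ℝ → ℝ) (hU₀ : ∀ x, U₀ x = Real.sqrt (2 * ω) * (Real.cosh (Real.sqrt ω * x))⁻¹)
    (V : ℝ → ℝ)
    (hV : ∀ x, V x = ((Real.cosh (Real.sqrt ω * x))⁻¹) ^ κ * Real.tanh (Real.sqrt ω * x)) :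
    (∀ x, -(deriv (deriv V)) x + s * V x - β₁ * (U₀ x) ^ 2 * V x = 0) ∧
    (∃ C : ℝ, ∀ x, |V x| ≤ C) ∧ V ≠ 0 := by
  set a := Real.sqrt ω with ha
  have ha2 : a ^ 2 = ω := Real.sq_sqrt hω.le
  have hκ0 : 0 ≤ κ := hκ ▸ Real.sqrt_nonneg _
  have hκ2 : κ ^ 2 = s / ω := by rw [hκ]; exact Real.sq_sqrt (div_nonneg hs.le hω.le)
  have hsω : s = ω * κ ^ 2 := by rw [hκ2]; field_simp
  have hVf : V = fun x => ((Real.cosh (a * x))⁻¹) ^ κ * Real.tanh (a * x) := funext hV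
  have hdV : deriv V = fun x => a * (((Real.cosh (a * x))⁻¹) ^ κ *
      (1 - (κ + 1) * Real.tanh (a * x) ^ 2)) := by
    funext x
    rw [hVf]
    have h := (hasDerivAt_V_aux a κ x).deriv
    rw [h]; ring
  refine ⟨fun x => ?_, ⟨1, fun x => ?_⟩, ?_⟩
  · have hdd : deriv (deriv V) x = a ^ 2 * ((Real.cosh (a * x))⁻¹) ^ κ * Real.tanh (a * x) *
        ((κ + 1) * (κ + 2) * Real.tanh (a * x) ^ 2 - (3 * κ + 2)) := by
      rw [hdV]
      exact (hasDerivAt_W_aux a κ x).deriv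
    have hsq2ω : Real.sqrt (2 * ω) ^ 2 = 2 * ω := Real.sq_sqrt (by positivity)
    rw [hdd, hV x, hU₀ x, mul_pow, hsq2ω, hβ₁, hsω, ha2,
      tanh_sq_eq (a * x)]
    ring
  · rw [hV x]
    have hcpos : 0 < Real.cosh (a * x) := Real.cosh_pos _
    have h1 : ((Real.cosh (a * x))⁻¹) ^ κ ≤ 1 :=
      Real.rpow_le_one (by positivity) (inv_le_one_of_one_le₀ (Real.one_le_cosh _)) hκ0
    have h2 : |Real.tanh (a * x)| ≤ 1 := by
      rw [Real.tanh_eq_sinh_div_cosh, abs_div, abs_of_pos hcpos, div_le_one hcpos]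
      have := Real.cosh_sq_sub_sinh_sq (a * x)
      nlinarith [abs_nonneg (Real.sinh (a * x)), sq_abs (Real.sinh (a * x))]
    have h0 : 0 ≤ ((Real.cosh (a * x))⁻¹) ^ κ := by positivity
    calc |((Real.cosh (a * x))⁻¹) ^ κ * Real.tanh (a * x)|
        = ((Real.cosh (a * x))⁻¹) ^ κ * |Real.tanh (a * x)| := by
          rw [abs_mul, abs_of_nonneg h0]
      _ ≤ 1 * 1 := mul_le_mul h1 h2 (abs_nonneg _) zero_le_one
      _ = 1 := by ring
  · intro h
    have ha0 : 0 < a := Real.sqrt_pos.mpr hω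
    have hx : V (1 / a) = 0 := by rw [h]; rfl
    rw [hV] at hx
    have ha1 : a * (1 / a) = 1 := by field_simp
    rw [ha1] at hx
    have h1 : 0 < ((Real.cosh 1)⁻¹) ^ κ := Real.rpow_pos_of_pos (by positivity) _
    have h2 : 0 < Real.tanh 1 := by
      rw [Real.tanh_eq_sinh_div_cosh]
      exact div_pos (by simpa using Real.sinh_pos.mpr one_pos) (Real.cosh_pos 1)
    nlinarith
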